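/- Let ρ be holomorphic near 0 in ℂ² with ρ₀₀ = ρ₁₀ = ρ₀₁ = ρ₂₀ = ρ₁₁ = 0 and ρ₀₂ ≠ 0, and suppose the quantities 𝒜₃^ρ = ρ₃₀ and 𝒜₄^ρ = ρ₄₀ − 3ρ₂₁²/ρ₀₂ both vanish. Then 𝒜₅^ρ := ρ₅₀ − 10ρ₂₁ρ₃₁/ρ₀₂ + 15ρ₁₂ρ₂₁²/ρ₀₂² satisfies: for any holomorphic function τ near 0 with τ(0,0) ≠ 0, 𝒜₅^{τρ} = τ(0,0)·𝒜₅^ρ. -/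

import Mathlib

/-!
STATEMENT 4: Let ρ be holomorphic near 0 in ℂ² with ρ₀₀ = ρ₁₀ = ρ₀₁ = ρ₂₀ = ρ₁₁ = 0 and
ρ₀₂ ≠ 0, and suppose 𝒜₃^ρ = ρ₃₀ and 𝒜₄^ρ = ρ₄₀ − 3ρ₂₁²/ρ₀₂ both vanish.  Then
𝒜₅^ρ := ρ₅₀ − 10ρ₂₁ρ₃₁/ρ₀₂ + 15ρ₁₂ρ₂₁²/ρ₀₂² satisfies 𝒜₅^{τρ} = τ(0,0)·𝒜₅^ρ for any
holomorphic τ near 0 with τ(0,0) ≠ 0.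
-/

/-- `pd i j f` is the partial derivative `∂^{i+j} f / ∂x^i ∂y^j` at the origin of `ℂ²`. -/
noncomputable def pd (i j : ℕ) (f : ℂ × ℂ → ℂ) : ℂ :=
  iteratedDeriv i (fun x => iteratedDeriv j (fun y => f (x, y)) 0) 0

/-- The quantity `𝒜₅` of a function of two complex variables. -/
noncomputable def A5 (g : ℂ × ℂ → ℂ) : ℂ :=
  pd 5 0 g - 10 * pd 2 1 g * pd 3 1 g / pd 0 2 g
    + 15 * pd 1 2 g * (pd 2 1 g) ^ 2 / (pd 0 2 g) ^ 2

noncomputable def Dv (v : ℂ × ℂ) (f : ℂ × ℂ → ℂ) : ℂ × ℂ → ℂ := fun p => fderiv ℂ f p v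

lemma Dv_analytic {s : Set (ℂ × ℂ)} {f : ℂ × ℂ → ℂ} (hf : AnalyticOnNhd ℂ f s) (v : ℂ × ℂ) :
    AnalyticOnNhd ℂ (Dv v f) s :=
  (ContinuousLinearMap.apply ℂ ℂ v).comp_analyticOnNhd hf.fderiv

lemma Dv_iter_analytic {s : Set (ℂ × ℂ)} {f : ℂ × ℂ → ℂ} (hf : AnalyticOnNhd ℂ f s)
    (v : ℂ × ℂ) (n : ℕ) : AnalyticOnNhd ℂ ((Dv v)^[n] f) s := by
  induction n generalizing f with
  | zero => exact hf
  | succ n ih => rw [Function.iterate_succ_apply]; exact ih (Dv_analytic hf v)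


lemma Dv_congr {s : Set (ℂ × ℂ)} (hs : IsOpen s) {f g : ℂ × ℂ → ℂ} (h : Set.EqOn f g s)
    (v : ℂ × ℂ) : Set.EqOn (Dv v f) (Dv v g) s := fun p hp => by
  have : f =ᶠ[nhds p] g := Filter.eventuallyEq_of_mem (hs.mem_nhds hp) h
  simp only [Dv, this.fderiv_eq]

lemma Dv_iter_congr {s : Set (ℂ × ℂ)} (hs : IsOpen s) {f g : ℂ × ℂ → ℂ} (h : Set.EqOn f g s)
    (v : ℂ × ℂ) (n : ℕ) : Set.EqOn ((Dv v)^[n] f) ((Dv v)^[n] g) s := by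
  induction n generalizing f g with
  | zero => exact h
  | succ n ih =>
    rw [Function.iterate_succ_apply, Function.iterate_succ_apply]
    exact ih (Dv_congr hs h v)

lemma Dv_mul {s : Set (ℂ × ℂ)} {f g : ℂ × ℂ → ℂ} (hf : AnalyticOnNhd ℂ f s)
    (hg : AnalyticOnNhd ℂ g s) (v : ℂ × ℂ) :
    Set.EqOn (Dv v (fun p => f p * g p)) (fun p => Dv v f p * g p + f p * Dv v g p) s :=
  fun p hp => by
  have h := fderiv_fun_mul ((hf p hp).differentiableAt) ((hg p hp).differentiableAt)
  simp only [Dv, h, ContinuousLinearMap.add_apply, ContinuousLinearMap.smul_apply, smul_eq_mul]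
  ring

lemma Dv_add {s : Set (ℂ × ℂ)} {f g : ℂ × ℂ → ℂ} (hf : AnalyticOnNhd ℂ f s)
    (hg : AnalyticOnNhd ℂ g s) (v : ℂ × ℂ) :
    Set.EqOn (Dv v (fun p => f p + g p)) (fun p => Dv v f p + Dv v g p) s := fun p hp => by
  have h := fderiv_fun_add ((hf p hp).differentiableAt) ((hg p hp).differentiableAt)
  simp only [Dv, h, ContinuousLinearMap.add_apply]

lemma Dv_const_mul {s : Set (ℂ × ℂ)} {f : ℂ × ℂ → ℂ} (hf : AnalyticOnNhd ℂ f s)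
    (c : ℂ) (v : ℂ × ℂ) :
    Set.EqOn (Dv v (fun p => c * f p)) (fun p => c * Dv v f p) s := fun p hp => by
  have h := fderiv_const_mul ((hf p hp).differentiableAt) c
  simp only [Dv, h, ContinuousLinearMap.smul_apply, smul_eq_mul]

lemma Dv_iter_add {s : Set (ℂ × ℂ)} (hs : IsOpen s) {f g : ℂ × ℂ → ℂ}
    (hf : AnalyticOnNhd ℂ f s) (hg : AnalyticOnNhd ℂ g s) (v : ℂ × ℂ) (n : ℕ) :
    Set.EqOn ((Dv v)^[n] (fun p => f p + g p))
      (fun p => (Dv v)^[n] f p + (Dv v)^[n] g p) s := by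
  induction n generalizing f g with
  | zero => intro p _; rfl
  | succ n ih =>
    intro p hp
    rw [Function.iterate_succ_apply]
    have h1 := Dv_iter_congr hs (Dv_add hf hg v) v n hp
    rw [h1, ih (Dv_analytic hf v) (Dv_analytic hg v) hp,
      Function.iterate_succ_apply, Function.iterate_succ_apply]

lemma Dv_iter_const_mul {s : Set (ℂ × ℂ)} (hs : IsOpen s) {f : ℂ × ℂ → ℂ}
    (hf : AnalyticOnNhd ℂ f s) (c : ℂ) (v : ℂ × ℂ) (n : ℕ) :
    Set.EqOn ((Dv v)^[n] (fun p => c * f p)) (fun p => c * (Dv v)^[n] f p) s := by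
  induction n generalizing f with
  | zero => intro p _; rfl
  | succ n ih =>
    intro p hp
    rw [Function.iterate_succ_apply]
    have h1 := Dv_iter_congr hs (Dv_const_mul hf c v) v n hp
    rw [h1, ih (Dv_analytic hf v) hp, Function.iterate_succ_apply]

lemma Dv_iter_mul {s : Set (ℂ × ℂ)} (hs : IsOpen s) {f g : ℂ × ℂ → ℂ}
    (hf : AnalyticOnNhd ℂ f s) (hg : AnalyticOnNhd ℂ g s) (v : ℂ × ℂ) (n : ℕ) :
    Set.EqOn ((Dv v)^[n] (fun p => f p * g p))
      (fun p => ∑ k ∈ Finset.range (n + 1),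
        (n.choose k : ℂ) * ((Dv v)^[k] f p * (Dv v)^[n - k] g p)) s := by
  induction n generalizing f g with
  | zero => intro p _; simp
  | succ n ih =>
    intro p hp
    rw [Function.iterate_succ_apply]
    have h1 := Dv_iter_congr hs (Dv_mul hf hg v) v n hp
    rw [h1, Dv_iter_add hs ((Dv_analytic hf v).mul hg) (hf.mul (Dv_analytic hg v)) v n hp,
      ]
    have e1 := ih (Dv_analytic hf v) hg hp
    have e2 := ih hf (Dv_analytic hg v) hp
    simp only at e1 e2 ⊢
    rw [e1, e2]
    have key := Finset.sum_choose_succ_mul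
      (fun a b => (Dv v)^[a] f p * (Dv v)^[b] g p) n
    rw [show n + 1 + 1 = n + 2 from rfl, key, add_comm]
    congr 1
    · refine Finset.sum_congr rfl fun k hk => ?_
      rw [← Function.iterate_succ_apply]
      have : n - k + 1 = n + 1 - k := by
        simp only [Finset.mem_range] at hk; omega
      rw [Nat.succ_eq_add_one, this]

lemma Dv_iter_sum {s : Set (ℂ × ℂ)} (hs : IsOpen s) {ι : Type*} (T : Finset ι)
    (F : ι → ℂ × ℂ → ℂ) (hF : ∀ k ∈ T, AnalyticOnNhd ℂ (F k) s) (v : ℂ × ℂ) (n : ℕ) :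
    Set.EqOn ((Dv v)^[n] (fun p => ∑ k ∈ T, F k p))
      (fun p => ∑ k ∈ T, (Dv v)^[n] (F k) p) s := by
  classical
  induction T using Finset.induction with
  | empty =>
    intro p hp
    simp only [Finset.sum_empty]
    have : Set.EqOn ((Dv v)^[n] (fun _ : ℂ × ℂ => (0:ℂ))) (fun _ => (0:ℂ)) s := by
      induction n with
      | zero => intro q _; rfl
      | succ m ihm =>
        intro q hq
        rw [Function.iterate_succ_apply]
        have h0 : Set.EqOn (Dv v (fun _ : ℂ × ℂ => (0:ℂ))) (fun _ => (0:ℂ)) s := by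
          intro r _; simp [Dv]
        exact (Dv_iter_congr hs h0 v m hq).trans (ihm hq)
    exact this hp
  | @insert k T' hkT ih =>
    intro p hp
    simp only [Finset.sum_insert hkT]
    have hF1 : AnalyticOnNhd ℂ (F k) s := hF k (Finset.mem_insert_self k T')
    have hF2 : AnalyticOnNhd ℂ (fun p => ∑ j ∈ T', F j p) s := by
      apply Finset.analyticOnNhd_fun_sum
      intro j hj; exact hF j (Finset.mem_insert_of_mem hj)
    have h1 := Dv_iter_add hs hF1 hF2 v n hp
    simp only at h1
    rw [h1, ih (fun j hj => hF j (Finset.mem_insert_of_mem hj)) hp]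

lemma evEq_iteratedDeriv {f g : ℂ → ℂ} {x : ℂ} (h : f =ᶠ[nhds x] g) (n : ℕ) :
    iteratedDeriv n f x = iteratedDeriv n g x := by
  induction n generalizing f g with
  | zero => simpa using h.self_of_nhds
  | succ n ih => rw [iteratedDeriv_succ', iteratedDeriv_succ']; exact ih h.deriv

lemma iterY {s : Set (ℂ × ℂ)} (hs : IsOpen s) {f : ℂ × ℂ → ℂ} (hf : AnalyticOnNhd ℂ f s)
    {x : ℂ} (hx : (x, (0:ℂ)) ∈ s) (j : ℕ) :
    iteratedDeriv j (fun y => f (x, y)) 0 = (Dv (0, 1))^[j] f (x, 0) := by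
  induction j generalizing f with
  | zero => simp
  | succ j ih =>
    rw [iteratedDeriv_succ']
    have hmem : {y : ℂ | (x, y) ∈ s} ∈ nhds (0:ℂ) :=
      (hs.preimage (Continuous.prodMk_right x)).mem_nhds hx
    have hev : deriv (fun y => f (x, y)) =ᶠ[nhds (0:ℂ)] fun y => Dv (0,1) f (x, y) := by
      filter_upwards [hmem] with y hy
      have hd : HasDerivAt (fun y' => f (x, y')) (fderiv ℂ f (x, y) (0, 1)) y := by
        have hc : HasDerivAt (fun y' : ℂ => (x, y')) ((0:ℂ), (1:ℂ)) y :=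
          (hasDerivAt_const y x).prodMk (hasDerivAt_id y)
        exact ((hf (x, y) hy).differentiableAt.hasFDerivAt.comp_hasDerivAt y hc)
      exact hd.deriv
    rw [evEq_iteratedDeriv hev j, ih (Dv_analytic hf (0,1)) ]
    rw [← Function.iterate_succ_apply]

lemma iterX {s : Set (ℂ × ℂ)} (hs : IsOpen s) {f : ℂ × ℂ → ℂ} (hf : AnalyticOnNhd ℂ f s)
    (h0 : ((0:ℂ), (0:ℂ)) ∈ s) (i : ℕ) :
    iteratedDeriv i (fun x => f (x, 0)) 0 = (Dv (1, 0))^[i] f (0, 0) := by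
  induction i generalizing f with
  | zero => simp
  | succ i ih =>
    rw [iteratedDeriv_succ']
    have hmem : {x : ℂ | (x, (0:ℂ)) ∈ s} ∈ nhds (0:ℂ) :=
      (hs.preimage (continuous_id.prodMk continuous_const)).mem_nhds h0
    have hev : deriv (fun x => f (x, 0)) =ᶠ[nhds (0:ℂ)] fun x => Dv (1,0) f (x, 0) := by
      filter_upwards [hmem] with x hx
      have hd : HasDerivAt (fun x' => f (x', 0)) (fderiv ℂ f (x, 0) (1, 0)) x := by
        have hc : HasDerivAt (fun x' : ℂ => (x', (0:ℂ))) ((1:ℂ), (0:ℂ)) x :=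
          (hasDerivAt_id x).prodMk (hasDerivAt_const x 0)
        exact ((hf (x, 0) hx).differentiableAt.hasFDerivAt.comp_hasDerivAt x hc)
      exact hd.deriv
    rw [evEq_iteratedDeriv hev i, ih (Dv_analytic hf (1,0))]
    rw [← Function.iterate_succ_apply]

lemma pd_eq {s : Set (ℂ × ℂ)} (hs : IsOpen s) {f : ℂ × ℂ → ℂ} (hf : AnalyticOnNhd ℂ f s)
    (h0 : ((0:ℂ), (0:ℂ)) ∈ s) (i j : ℕ) :
    pd i j f = (Dv (1, 0))^[i] ((Dv (0, 1))^[j] f) (0, 0) := by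
  unfold pd
  have hmem : {x : ℂ | (x, (0:ℂ)) ∈ s} ∈ nhds (0:ℂ) :=
    (hs.preimage (continuous_id.prodMk continuous_const)).mem_nhds h0
  have hev : (fun x => iteratedDeriv j (fun y => f (x, y)) 0)
      =ᶠ[nhds (0:ℂ)] fun x => (Dv (0,1))^[j] f (x, 0) := by
    filter_upwards [hmem] with x hx
    exact iterY hs hf hx j
  rw [evEq_iteratedDeriv hev i]
  exact iterX hs (Dv_iter_analytic hf (0,1) j) h0 i

lemma pd_mul {s : Set (ℂ × ℂ)} (hs : IsOpen s) {f g : ℂ × ℂ → ℂ}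
    (hf : AnalyticOnNhd ℂ f s) (hg : AnalyticOnNhd ℂ g s)
    (h0 : ((0:ℂ), (0:ℂ)) ∈ s) (i j : ℕ) :
    pd i j (fun p => f p * g p) =
      ∑ b ∈ Finset.range (j + 1), (j.choose b : ℂ) *
        ∑ a ∈ Finset.range (i + 1), (i.choose a : ℂ) *
          (pd a b f * pd (i - a) (j - b) g) := by
  rw [pd_eq hs (hf.mul hg) h0]
  have h2 := Dv_iter_mul hs hf hg (0,1) j
  have h3 := Dv_iter_congr hs h2 (1,0) i h0
  rw [h3]
  have hF : ∀ b ∈ Finset.range (j+1), AnalyticOnNhd ℂ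
      (fun p => (j.choose b : ℂ) * ((Dv (0,1))^[b] f p * (Dv (0,1))^[j-b] g p)) s := by
    intro b _
    exact analyticOnNhd_const.mul ((Dv_iter_analytic hf (0,1) b).mul
      (Dv_iter_analytic hg (0,1) (j-b)))
  have h4 := Dv_iter_sum hs (Finset.range (j+1))
    (fun b => fun p => (j.choose b : ℂ) * ((Dv (0,1))^[b] f p * (Dv (0,1))^[j-b] g p))
    hF (1,0) i h0
  simp only at h4
  rw [h4]
  refine Finset.sum_congr rfl fun b _ => ?_
  have h5 := Dv_iter_const_mul hs ((Dv_iter_analytic hf (0,1) b).mul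
      (Dv_iter_analytic hg (0,1) (j-b))) (j.choose b : ℂ) (1,0) i h0
  simp only at h5
  rw [h5]
  congr 1
  have h6 := Dv_iter_mul hs (Dv_iter_analytic hf (0,1) b)
      (Dv_iter_analytic hg (0,1) (j-b)) (1,0) i h0
  simp only at h6
  rw [h6]
  refine Finset.sum_congr rfl fun a _ => ?_
  rw [pd_eq hs hf h0, pd_eq hs hg h0]

lemma pd_zero_zero (f : ℂ × ℂ → ℂ) : pd 0 0 f = f 0 := by
  simp only [pd, iteratedDeriv_zero]
  rfl

theorem stmt_4 (U : Set (ℂ × ℂ)) (hU : IsOpen U) (h0U : (0 : ℂ × ℂ) ∈ U)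
    (ρ τ : ℂ × ℂ → ℂ) (hρ : AnalyticOnNhd ℂ ρ U) (hτ : AnalyticOnNhd ℂ τ U)
    (h00 : pd 0 0 ρ = 0) (h10 : pd 1 0 ρ = 0) (h01 : pd 0 1 ρ = 0)
    (h20 : pd 2 0 ρ = 0) (h11 : pd 1 1 ρ = 0) (h02 : pd 0 2 ρ ≠ 0)
    (hA3 : pd 3 0 ρ = 0)
    (hA4 : pd 4 0 ρ - 3 * (pd 2 1 ρ) ^ 2 / pd 0 2 ρ = 0)
    (hτ0 : τ 0 ≠ 0) :
    A5 (fun p => τ p * ρ p) = τ 0 * A5 ρ := by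
  have h0 : ((0:ℂ), (0:ℂ)) ∈ U := h0U
  have p00τ : pd 0 0 τ = τ 0 := pd_zero_zero τ
  have e02 : pd 0 2 (fun p => τ p * ρ p) = τ 0 * pd 0 2 ρ := by
    rw [pd_mul hU hτ hρ h0 0 2]
    simp [Finset.sum_range_succ, h00, h01, p00τ]
  have e21 : pd 2 1 (fun p => τ p * ρ p) = τ 0 * pd 2 1 ρ := by
    rw [pd_mul hU hτ hρ h0 2 1]
    simp [Finset.sum_range_succ, h00, h10, h01, h20, h11, p00τ]
  have e12 : pd 1 2 (fun p => τ p * ρ p) = τ 0 * pd 1 2 ρ + pd 1 0 τ * pd 0 2 ρ := by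
    rw [pd_mul hU hτ hρ h0 1 2]
    simp [Finset.sum_range_succ, h00, h10, h01, h11, p00τ]
  have e31 : pd 3 1 (fun p => τ p * ρ p) = τ 0 * pd 3 1 ρ + 3 * pd 1 0 τ * pd 2 1 ρ := by
    rw [pd_mul hU hτ hρ h0 3 1]
    simp [Finset.sum_range_succ, h00, h10, h01, h20, h11, hA3, p00τ]
    ring
  have e50 : pd 5 0 (fun p => τ p * ρ p) = τ 0 * pd 5 0 ρ + 5 * pd 1 0 τ * pd 4 0 ρ := by
    rw [pd_mul hU hτ hρ h0 5 0]
    simp [Finset.sum_range_succ, h00, h10, h20, hA3, p00τ]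
    ring
  have hA4' : pd 4 0 ρ * pd 0 2 ρ = 3 * (pd 2 1 ρ)^2 := by
    field_simp at hA4
    linear_combination hA4
  simp only [A5, e02, e21, e12, e31, e50]
  field_simp
  ring_nf
  linear_combination 5 * pd 1 0 τ * pd 0 2 ρ * hA4'
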